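/- arXiv:1203.0632 — 5 statements merged into one kernel-verified Lean document; each statement's English description precedes it below -/
import Mathlib

section
/- Let V and W₁, …, W_J be finite-dimensional real inner product spaces. Let A and S be self-adjoint positive-definite linear operators on V, let A_j be a self-adjoint positive-definite linear operator on W_j for each j = 1, …, J, and let Π_j : W_j → V be linear maps with adjoints Π_j* : V → W_j. Define the preconditioner B := S⁻¹ + Σ_{j=1}^J Π_j ∘ A_j⁻¹ ∘ Π_j*. Assume: (1) there are constants c_j > 0 such that ⟨A Π_j w_j, Π_j w_j⟩ ≤ c_j² ⟨A_j w_j, w_j⟩ for all w_j ∈ W_j; (2) there is a constant c_s > 0 such that ⟨A v, v⟩ ≤ c_s² ⟨S v, v⟩ for all v ∈ V; (3) there is a constant c₀ > 0 such that every v ∈ V admits a decomposition v = v₀ + Σ_{j=1}^J Π_j w_j with v₀ ∈ V, w_j ∈ W_j, and ⟨S v₀, v₀⟩ + Σ_{j=1}^J ⟨A_j w_j, w_j⟩ ≤ c₀² ⟨A v, v⟩. Then for every v ∈ V, c₀⁻² ⟨A v, v⟩ ≤ ⟨A B A v, v⟩ ≤ (c_s² + c_1² + ⋯ + c_J²) ⟨A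 v, v⟩; in particular, the condition number of B∘A (the ratio of the supremum to the infimum over v ≠ 0 of the Rayleigh quotients ⟨A B A v, v⟩ / ⟨A v, v⟩) is at most c₀² (c_s² + c_1² + ⋯ + c_J²). -/
open RealInnerProductSpace

private lemma sqrt_quad {t k : ℝ} (ht : 0 ≤ t) (h : t ≤ k * Real.sqrt t) :
    t ≤ k ^ 2 := by
  have h1 : Real.sqrt t ^ 2 = t := Real.sq_sqrt ht
  nlinarith [Real.sqrt_nonneg t, sq_nonneg (Real.sqrt t - k)]

private lemma cs_two {a b c d : ℝ} (ha : 0 ≤ a) (hb : 0 ≤ b) (hc : 0 ≤ c) (hd : 0 ≤ d) :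
    Real.sqrt a * Real.sqrt b + Real.sqrt c * Real.sqrt d
      ≤ Real.sqrt (a + c) * Real.sqrt (b + d) := by
  rw [show Real.sqrt (a+c) * Real.sqrt (b+d) = Real.sqrt ((a+c)*(b+d)) from
    (Real.sqrt_mul (by linarith) _).symm]
  refine Real.le_sqrt_of_sq_le ?_
  have e1 := Real.sq_sqrt ha
  have e2 := Real.sq_sqrt hb
  have e3 := Real.sq_sqrt hc
  have e4 := Real.sq_sqrt hd
  nlinarith [sq_nonneg (Real.sqrt a * Real.sqrt d - Real.sqrt c * Real.sqrt b),
    Real.sqrt_nonneg a, Real.sqrt_nonneg b, Real.sqrt_nonneg c, Real.sqrt_nonneg d,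
    mul_nonneg (Real.sqrt_nonneg a) (Real.sqrt_nonneg b),
    mul_nonneg (Real.sqrt_nonneg c) (Real.sqrt_nonneg d)]

private lemma cs_op {V : Type*} [NormedAddCommGroup V] [InnerProductSpace ℝ V]
    (A : V →ₗ[ℝ] V) (hsa : ∀ u v : V, ⟪A u, v⟫ = ⟪u, A v⟫)
    (hpd : ∀ v : V, v ≠ 0 → 0 < ⟪A v, v⟫) (x y : V) :
    ⟪A x, y⟫ ≤ Real.sqrt ⟪A x, x⟫ * Real.sqrt ⟪A y, y⟫ := by
  have hnn : ∀ z : V, 0 ≤ ⟪A z, z⟫ := by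
    intro z; rcases eq_or_ne z 0 with rfl | hz
    · simp
    · exact (hpd z hz).le
  by_cases hy : y = 0
  · simp [hy]
  · have hb : 0 < ⟪A y, y⟫ := hpd y hy
    have hsym : ⟪A y, x⟫ = ⟪A x, y⟫ := by rw [hsa, real_inner_comm]
    have hE : ⟪A ((⟪A y, y⟫ : ℝ) • x - (⟪A x, y⟫ : ℝ) • y),
        (⟪A y, y⟫ : ℝ) • x - (⟪A x, y⟫ : ℝ) • y⟫
        = ⟪A y, y⟫ ^ 2 * ⟪A x, x⟫ - ⟪A y, y⟫ * ⟪A x, y⟫ ^ 2 := by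
      simp only [map_sub, map_smul, inner_sub_left, inner_sub_right,
        real_inner_smul_left, real_inner_smul_right, hsym]
      ring
    have h0 := hnn ((⟪A y, y⟫ : ℝ) • x - (⟪A x, y⟫ : ℝ) • y)
    rw [hE] at h0
    have key : ⟪A x, y⟫ ^ 2 ≤ ⟪A x, x⟫ * ⟪A y, y⟫ := by nlinarith
    calc ⟪A x, y⟫ ≤ |⟪A x, y⟫| := le_abs_self _
      _ = Real.sqrt (⟪A x, y⟫ ^ 2) := (Real.sqrt_sq_eq_abs _).symm
      _ ≤ Real.sqrt (⟪A x, x⟫ * ⟪A y, y⟫) := Real.sqrt_le_sqrt key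
      _ = Real.sqrt ⟪A x, x⟫ * Real.sqrt ⟪A y, y⟫ := Real.sqrt_mul (hnn x) _

private lemma term_bound {V : Type*} [NormedAddCommGroup V] [InnerProductSpace ℝ V]
    (A : V →ₗ[ℝ] V) (hsa : ∀ u v : V, ⟪A u, v⟫ = ⟪u, A v⟫)
    (hpd : ∀ v : V, v ≠ 0 → 0 < ⟪A v, v⟫) (x v : V) {t k : ℝ}
    (htnn : 0 ≤ t) (hk : 0 ≤ k)
    (hteq : ⟪A x, v⟫ = t) (hb : ⟪A x, x⟫ ≤ k ^ 2 * t) :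
    t ≤ k ^ 2 * ⟪A v, v⟫ := by
  have hAnn : 0 ≤ ⟪A v, v⟫ := by
    rcases eq_or_ne v 0 with rfl | hv
    · simp
    · exact (hpd v hv).le
  have hr := cs_op A hsa hpd x v
  rw [hteq] at hr
  have h5 : t ≤ (k * Real.sqrt ⟪A v, v⟫) * Real.sqrt t := by
    calc t ≤ Real.sqrt ⟪A x, x⟫ * Real.sqrt ⟪A v, v⟫ := hr
      _ ≤ Real.sqrt (k ^ 2 * t) * Real.sqrt ⟪A v, v⟫ := by
          exact mul_le_mul_of_nonneg_right (Real.sqrt_le_sqrt hb) (Real.sqrt_nonneg _)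
      _ = (k * Real.sqrt ⟪A v, v⟫) * Real.sqrt t := by
          rw [Real.sqrt_mul (sq_nonneg k), Real.sqrt_sq hk]; ring
  calc t ≤ (k * Real.sqrt ⟪A v, v⟫) ^ 2 := sqrt_quad htnn h5
    _ = k ^ 2 * ⟪A v, v⟫ := by rw [mul_pow, Real.sq_sqrt hAnn]

/-- The fast auxiliary space preconditioning (FASP) theorem.  Given self-adjoint
positive-definite operators `A`, `S` on `V` and `A_j` on auxiliary spaces `W_j`,
transfer maps `Π_j : W_j → V` with adjoints `Π_j*`, and the three FASP assumptions
(boundedness of the transfer maps, boundedness of the smoother, and existence of a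
stable decomposition), the preconditioner `B = S⁻¹ + Σ_j Π_j ∘ A_j⁻¹ ∘ Π_j*`
satisfies `c₀⁻² ⟨Av,v⟩ ≤ ⟨ABAv,v⟩ ≤ (c_s² + Σ_j c_j²) ⟨Av,v⟩` for all `v`; in
particular the condition number of `B∘A` (the ratio of the supremum to the infimum
of the Rayleigh quotients `⟨ABAv,v⟩/⟨Av,v⟩` over `v ≠ 0`) is at most
`c₀² (c_s² + Σ_j c_j²)`. -/
theorem fasp_condition_number
    {V : Type*} [NormedAddCommGroup V] [InnerProductSpace ℝ V] [FiniteDimensional ℝ V]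
    (J : ℕ) (W : Fin J → Type*)
    [∀ j, NormedAddCommGroup (W j)] [∀ j, InnerProductSpace ℝ (W j)]
    [∀ j, FiniteDimensional ℝ (W j)]
    (A S Sinv : V →ₗ[ℝ] V)
    (hA_sa : ∀ u v : V, ⟪A u, v⟫ = ⟪u, A v⟫)
    (hA_pd : ∀ v : V, v ≠ 0 → 0 < ⟪A v, v⟫)
    (hS_sa : ∀ u v : V, ⟪S u, v⟫ = ⟪u, S v⟫)
    (hS_pd : ∀ v : V, v ≠ 0 → 0 < ⟪S v, v⟫)
    (hSinv₁ : S ∘ₗ Sinv = LinearMap.id) (hSinv₂ : Sinv ∘ₗ S = LinearMap.id)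
    (Aop : ∀ j, W j →ₗ[ℝ] W j) (Aopinv : ∀ j, W j →ₗ[ℝ] W j)
    (hAop_sa : ∀ j, ∀ u v : W j, ⟪Aop j u, v⟫ = ⟪u, Aop j v⟫)
    (hAop_pd : ∀ j, ∀ w : W j, w ≠ 0 → 0 < ⟪Aop j w, w⟫)
    (hAopinv₁ : ∀ j, Aop j ∘ₗ Aopinv j = LinearMap.id)
    (hAopinv₂ : ∀ j, Aopinv j ∘ₗ Aop j = LinearMap.id)
    (Pi : ∀ j, W j →ₗ[ℝ] V) (PiStar : ∀ j, V →ₗ[ℝ] W j)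
    (hadj : ∀ j, ∀ (w : W j) (v : V), ⟪Pi j w, v⟫ = ⟪w, PiStar j v⟫)
    (c : Fin J → ℝ) (hc : ∀ j, 0 < c j)
    (h1 : ∀ j, ∀ w : W j, ⟪A (Pi j w), Pi j w⟫ ≤ (c j) ^ 2 * ⟪Aop j w, w⟫)
    (cs : ℝ) (hcs : 0 < cs)
    (h2 : ∀ v : V, ⟪A v, v⟫ ≤ cs ^ 2 * ⟪S v, v⟫)
    (c0 : ℝ) (hc0 : 0 < c0)
    (h3 : ∀ v : V, ∃ (v0 : V) (w : ∀ j, W j),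
        v = v0 + ∑ j, Pi j (w j) ∧
        ⟪S v0, v0⟫ + ∑ j, ⟪Aop j (w j), w j⟫ ≤ c0 ^ 2 * ⟪A v, v⟫) :
    let B : V →ₗ[ℝ] V := Sinv + ∑ j, (Pi j) ∘ₗ (Aopinv j) ∘ₗ (PiStar j)
    (∀ v : V,
        (c0 ^ 2)⁻¹ * ⟪A v, v⟫ ≤ ⟪A (B (A v)), v⟫ ∧
        ⟪A (B (A v)), v⟫ ≤ (cs ^ 2 + ∑ j, (c j) ^ 2) * ⟪A v, v⟫) ∧
    sSup {r : ℝ | ∃ v : V, v ≠ 0 ∧ r = ⟪A (B (A v)), v⟫ / ⟪A v, v⟫} /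
      sInf {r : ℝ | ∃ v : V, v ≠ 0 ∧ r = ⟪A (B (A v)), v⟫ / ⟪A v, v⟫}
      ≤ c0 ^ 2 * (cs ^ 2 + ∑ j, (c j) ^ 2) := by
  intro B
  have hA_nn : ∀ z : V, 0 ≤ ⟪A z, z⟫ := fun z => by
    rcases eq_or_ne z 0 with rfl | hz
    · simp
    · exact (hA_pd z hz).le
  have hS_nn : ∀ z : V, 0 ≤ ⟪S z, z⟫ := fun z => by
    rcases eq_or_ne z 0 with rfl | hz
    · simp
    · exact (hS_pd z hz).le
  have hAop_nn : ∀ j, ∀ z : W j, 0 ≤ ⟪Aop j z, z⟫ := fun j z => by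
    rcases eq_or_ne z 0 with rfl | hz
    · simp
    · exact (hAop_pd j z hz).le
  have hBval : ∀ v : V, ⟪A (B (A v)), v⟫
      = ⟪Sinv (A v), A v⟫ + ∑ j, ⟪Pi j (Aopinv j (PiStar j (A v))), A v⟫ := by
    intro v
    rw [hA_sa]
    simp only [B, LinearMap.add_apply, LinearMap.sum_apply, LinearMap.comp_apply,
      inner_add_left, sum_inner]
  have main : ∀ v : V, (c0 ^ 2)⁻¹ * ⟪A v, v⟫ ≤ ⟪A (B (A v)), v⟫ ∧
      ⟪A (B (A v)), v⟫ ≤ (cs ^ 2 + ∑ j, (c j) ^ 2) * ⟪A v, v⟫ := by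
    intro v
    have hr : (0:ℝ) ≤ ⟪A v, v⟫ := hA_nn v
    have hSu : S (Sinv (A v)) = A v := by
      simpa using LinearMap.congr_fun hSinv₁ (A v)
    have hAw : ∀ j, Aop j (Aopinv j (PiStar j (A v))) = PiStar j (A v) := fun j => by
      simpa using LinearMap.congr_fun (hAopinv₁ j) (PiStar j (A v))
    have ht0S : ⟪S (Sinv (A v)), Sinv (A v)⟫ = ⟪Sinv (A v), A v⟫ := by
      rw [real_inner_comm]
      exact congrArg (fun z => (inner (𝕜 := ℝ) (Sinv (A v)) z : ℝ)) hSu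
    have htj : ∀ j, ⟪Pi j (Aopinv j (PiStar j (A v))), A v⟫
        = ⟪Aop j (Aopinv j (PiStar j (A v))), Aopinv j (PiStar j (A v))⟫ := fun j => by
      rw [hadj j]
      exact (congrArg (fun z => (inner (𝕜 := ℝ) (Aopinv j (PiStar j (A v))) z : ℝ))
        (hAw j)).symm.trans (real_inner_comm _ _)
    have hT0nn : 0 ≤ ⟪Sinv (A v), A v⟫ := by rw [← ht0S]; exact hS_nn _
    have hTjnn : ∀ j, 0 ≤ ⟪Pi j (Aopinv j (PiStar j (A v))), A v⟫ := fun j => by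
      rw [htj j]; exact hAop_nn j _
    have hT0le : ⟪Sinv (A v), A v⟫ ≤ cs ^ 2 * ⟪A v, v⟫ := by
      refine term_bound A hA_sa hA_pd (Sinv (A v)) v hT0nn hcs.le (hA_sa _ v) ?_
      rw [← ht0S]
      exact h2 _
    have hTjle : ∀ j, ⟪Pi j (Aopinv j (PiStar j (A v))), A v⟫ ≤ (c j) ^ 2 * ⟪A v, v⟫ :=
      fun j => by
      refine term_bound A hA_sa hA_pd (Pi j (Aopinv j (PiStar j (A v)))) v (hTjnn j)
        (hc j).le (hA_sa _ v) ?_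
      rw [htj j]
      exact h1 j _
    have hupper : ⟪A (B (A v)), v⟫ ≤ (cs ^ 2 + ∑ j, (c j) ^ 2) * ⟪A v, v⟫ := by
      rw [hBval v, add_mul, Finset.sum_mul]
      exact add_le_add hT0le (Finset.sum_le_sum fun j _ => hTjle j)
    obtain ⟨v0, w, hvdec, hstab⟩ := h3 v
    have hsplit : ⟪A v, v⟫ = ⟪A v, v0⟫ + ∑ j, ⟪A v, Pi j (w j)⟫ := by
      have e : ⟪A v, v⟫ = ⟪A v, v0 + ∑ j, Pi j (w j)⟫ :=
        congrArg (fun z => (inner (𝕜 := ℝ) (A v) z : ℝ)) hvdec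
      rw [e, inner_add_right, inner_sum]
    have hl0 : ⟪A v, v0⟫ ≤ Real.sqrt ⟪Sinv (A v), A v⟫ * Real.sqrt ⟪S v0, v0⟫ := by
      have e : ⟪A v, v0⟫ = ⟪S (Sinv (A v)), v0⟫ :=
        (congrArg (fun z => (inner (𝕜 := ℝ) z v0 : ℝ)) hSu).symm
      rw [e, ← ht0S]
      exact cs_op S hS_sa hS_pd _ v0
    have hlj : ∀ j, ⟪A v, Pi j (w j)⟫
        ≤ Real.sqrt ⟪Pi j (Aopinv j (PiStar j (A v))), A v⟫
          * Real.sqrt ⟪Aop j (w j), w j⟫ := fun j => by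
      have e : ⟪A v, Pi j (w j)⟫ = ⟪Aop j (Aopinv j (PiStar j (A v))), w j⟫ := by
        rw [real_inner_comm, hadj j]
        exact (congrArg (fun z => (inner (𝕜 := ℝ) (w j) z : ℝ)) (hAw j)).symm.trans
          (real_inner_comm _ _)
      rw [e, htj j]
      exact cs_op (Aop j) (hAop_sa j) (hAop_pd j) _ (w j)
    have hsum : ∑ j, ⟪A v, Pi j (w j)⟫
        ≤ Real.sqrt (∑ j, ⟪Pi j (Aopinv j (PiStar j (A v))), A v⟫)
          * Real.sqrt (∑ j, ⟪Aop j (w j), w j⟫) :=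
      le_trans (Finset.sum_le_sum fun j _ => hlj j)
        (Real.sum_sqrt_mul_sqrt_le Finset.univ hTjnn (fun j => hAop_nn j (w j)))
    have hBnn : 0 ≤ ⟪Sinv (A v), A v⟫ + ∑ j, ⟪Pi j (Aopinv j (PiStar j (A v))), A v⟫ :=
      add_nonneg hT0nn (Finset.sum_nonneg fun j _ => hTjnn j)
    have hTall : ⟪A v, v⟫
        ≤ Real.sqrt (⟪Sinv (A v), A v⟫ + ∑ j, ⟪Pi j (Aopinv j (PiStar j (A v))), A v⟫)
          * Real.sqrt (⟪S v0, v0⟫ + ∑ j, ⟪Aop j (w j), w j⟫) := by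
      rw [hsplit]
      exact le_trans (add_le_add hl0 hsum)
        (cs_two hT0nn (hS_nn v0) (Finset.sum_nonneg fun j _ => hTjnn j)
          (Finset.sum_nonneg fun j _ => hAop_nn j (w j)))
    have hfin : ⟪A v, v⟫
        ≤ (c0 * Real.sqrt (⟪Sinv (A v), A v⟫
            + ∑ j, ⟪Pi j (Aopinv j (PiStar j (A v))), A v⟫)) * Real.sqrt ⟪A v, v⟫ := by
      refine le_trans hTall (le_trans (mul_le_mul_of_nonneg_left
        (Real.sqrt_le_sqrt hstab) (Real.sqrt_nonneg _)) (le_of_eq ?_))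
      rw [Real.sqrt_mul (sq_nonneg c0), Real.sqrt_sq hc0.le]
      ring
    have hlow2 : ⟪A v, v⟫ ≤ c0 ^ 2 * (⟪Sinv (A v), A v⟫
        + ∑ j, ⟪Pi j (Aopinv j (PiStar j (A v))), A v⟫) := by
      refine le_trans (sqrt_quad hr hfin) (le_of_eq ?_)
      rw [mul_pow, Real.sq_sqrt hBnn]
    refine ⟨?_, hupper⟩
    rw [hBval v]
    have hpos : (0:ℝ) < c0 ^ 2 := by positivity
    calc (c0 ^ 2)⁻¹ * ⟪A v, v⟫
        ≤ (c0 ^ 2)⁻¹ * (c0 ^ 2 * (⟪Sinv (A v), A v⟫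
            + ∑ j, ⟪Pi j (Aopinv j (PiStar j (A v))), A v⟫)) :=
          mul_le_mul_of_nonneg_left hlow2 (by positivity)
      _ = ⟪Sinv (A v), A v⟫ + ∑ j, ⟪Pi j (Aopinv j (PiStar j (A v))), A v⟫ := by
          field_simp
  refine ⟨main, ?_⟩
  set Q : Set ℝ := {r : ℝ | ∃ v : V, v ≠ 0 ∧ r = ⟪A (B (A v)), v⟫ / ⟪A v, v⟫} with hQ
  have hMnn : (0:ℝ) ≤ cs ^ 2 + ∑ j, (c j) ^ 2 := by positivity
  have hQbounds : ∀ q ∈ Q, (c0 ^ 2)⁻¹ ≤ q ∧ q ≤ cs ^ 2 + ∑ j, (c j) ^ 2 := by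
    rintro q ⟨v, hv, rfl⟩
    have hrpos : 0 < ⟪A v, v⟫ := hA_pd v hv
    obtain ⟨hlo, hhi⟩ := main v
    constructor
    · rw [le_div_iff₀ hrpos]
      linarith
    · rw [div_le_iff₀ hrpos]
      linarith
  by_cases hne : ∃ v : V, v ≠ 0
  · obtain ⟨v, hv⟩ := hne
    have hQne : Q.Nonempty := ⟨_, v, hv, rfl⟩
    have hbddA : BddAbove Q := ⟨cs ^ 2 + ∑ j, (c j) ^ 2, fun q hq => (hQbounds q hq).2⟩
    have hbddB : BddBelow Q := ⟨(c0 ^ 2)⁻¹, fun q hq => (hQbounds q hq).1⟩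
    have hsup : sSup Q ≤ cs ^ 2 + ∑ j, (c j) ^ 2 :=
      csSup_le hQne fun q hq => (hQbounds q hq).2
    have hinf : (c0 ^ 2)⁻¹ ≤ sInf Q := le_csInf hQne fun q hq => (hQbounds q hq).1
    have hinvpos : (0:ℝ) < (c0 ^ 2)⁻¹ := by positivity
    calc sSup Q / sInf Q ≤ (cs ^ 2 + ∑ j, (c j) ^ 2) / (c0 ^ 2)⁻¹ :=
          div_le_div₀ hMnn hsup hinvpos hinf
      _ = c0 ^ 2 * (cs ^ 2 + ∑ j, (c j) ^ 2) := by
          rw [div_eq_mul_inv, inv_inv]; ring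
  · have hQempty : Q = ∅ := by
      ext q
      simp only [hQ, Set.mem_setOf_eq, Set.mem_empty_iff_false, iff_false]
      rintro ⟨v, hv, _⟩
      exact hne ⟨v, hv⟩
    rw [hQempty]
    simp only [Real.sSup_empty, Real.sInf_empty, zero_div]
    positivity
end

section
/- Let V be a finite-dimensional real inner product space and T : V → V a self-adjoint positive-definite linear operator. Suppose the set of eigenvalues of T is the union σ₀ ∪ σ₁, where σ₀ is a finite set with m elements and σ₁ is a nonempty set contained in the interval [a, b] with 0 < a ≤ b. Let u, u₀ ∈ V and let (u_k) be a sequence in V having the conjugate-gradient optimality property for target u and initial guess u₀ with respect to T. Then for every integer k ≥ m, ‖u − u_k‖_T ≤ 2 K ((√(b/a) − 1)/(√(b/a) + 1))^{k−m} ‖u − u₀‖_T, where K = max_{λ ∈ σ₁} ∏_{μ ∈ σ₀} |1 − λ/μ|. -/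
open RealInnerProductSpace

/-- The energy norm `‖v‖_T = ⟨Tv, v⟩^{1/2}` associated with a (self-adjoint
positive-definite) linear operator `T` on a real inner product space. -/
noncomputable def energyNorm {V : Type*} [NormedAddCommGroup V] [InnerProductSpace ℝ V]
    (T : V →ₗ[ℝ] V) (v : V) : ℝ :=
  Real.sqrt ⟪T v, v⟫

/-- A sequence `(u_k)` has the conjugate-gradient optimality property for target `u`
and initial guess `u₀` with respect to `T` if for every `k` and every real polynomial
`p` with `deg p ≤ k` and `p(0) = 1`, `‖u - u_k‖_T ≤ ‖p(T)(u - u₀)‖_T`. -/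
def CGOptimal {V : Type*} [NormedAddCommGroup V] [InnerProductSpace ℝ V]
    (T : V →ₗ[ℝ] V) (u u₀ : V) (useq : ℕ → V) : Prop :=
  ∀ (k : ℕ) (p : Polynomial ℝ), p.natDegree ≤ k → p.eval 0 = 1 →
    energyNorm T (u - useq k) ≤
      energyNorm T ((Polynomial.aeval (T : Module.End ℝ V) p) (u - u₀))

namespace PCGAux

open Polynomial

lemma chebDegLe : ∀ n : ℕ, (Chebyshev.T ℝ (n:ℤ)).natDegree ≤ n
  | 0 => by simp
  | 1 => by simp
  | (n+2) => by
    have h1 := chebDegLe (n+1)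
    rw [show ((n+2:ℕ):ℤ) = ((n:ℕ):ℤ) + 2 by push_cast; ring, Chebyshev.T_add_two]
    refine le_trans (natDegree_sub_le _ _) (max_le ?_ (le_trans (chebDegLe n) (by omega)))
    calc (2 * X * Chebyshev.T ℝ ((n:ℤ)+1)).natDegree
        ≤ (2*X : ℝ[X]).natDegree + (Chebyshev.T ℝ ((n:ℤ)+1)).natDegree := natDegree_mul_le
      _ ≤ 1 + (n+1) := by
          gcongr
          · calc (2*X : ℝ[X]).natDegree ≤ (2:ℝ[X]).natDegree + X.natDegree := natDegree_mul_le
              _ ≤ 1 := by simp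
          · calc (Chebyshev.T ℝ ((n:ℤ)+1)).natDegree
                = (Chebyshev.T ℝ ((n+1:ℕ):ℤ)).natDegree := by push_cast; ring_nf
              _ ≤ n+1 := h1
      _ ≤ n + 2 := by omega

lemma chebEval (s : ℝ) (hs : s ≠ 0) : ∀ n : ℕ,
    (Chebyshev.T ℝ (n:ℤ)).eval ((s + s⁻¹)/2) = (s^n + (s⁻¹)^n)/2
  | 0 => by simp
  | 1 => by simp
  | (n+2) => by
    have h1 := chebEval s hs (n+1)
    have h2 := chebEval s hs n
    rw [show ((n+2:ℕ):ℤ) = ((n:ℕ):ℤ) + 2 by push_cast; ring, Chebyshev.T_add_two]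
    rw [show ((n:ℤ)+1) = ((n+1:ℕ):ℤ) by push_cast; ring]
    simp only [eval_sub, eval_mul, eval_ofNat, eval_X, h1, h2]
    have hinv : s * s⁻¹ = 1 := mul_inv_cancel₀ hs
    simp only [pow_succ]
    linear_combination ((s⁻¹ ^ n) / 2 + s ^ n / 2) * hinv

lemma chebAbsLe (n : ℤ) (x : ℝ) (hx : x ∈ Set.Icc (-1:ℝ) 1) :
    |(Chebyshev.T ℝ n).eval x| ≤ 1 := by
  have h := Polynomial.Chebyshev.T_real_cos (Real.arccos x) n
  rw [Real.cos_arccos hx.1 hx.2] at h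
  rw [h]
  exact Real.abs_cos_le_one _

variable {V : Type*} [NormedAddCommGroup V] [InnerProductSpace ℝ V] [FiniteDimensional ℝ V]

omit [FiniteDimensional ℝ V] in
lemma eigPos (T : V →ₗ[ℝ] V) (hpd : ∀ v : V, v ≠ 0 → 0 < ⟪T v, v⟫) {μ : ℝ}
    (h : Module.End.HasEigenvalue (T : Module.End ℝ V) μ) : 0 < μ := by
  obtain ⟨v, hv⟩ := h.exists_hasEigenvector
  have h1 : T v = μ • v := Module.End.mem_eigenspace_iff.mp hv.1
  have h2 := hpd v hv.2
  rw [h1, real_inner_smul_left] at h2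
  have h3 : (0:ℝ) < ⟪v, v⟫ := by
    rw [real_inner_self_eq_norm_sq]
    have : ‖v‖ ≠ 0 := norm_ne_zero_iff.mpr hv.2
    positivity
  nlinarith

lemma energyPolyBound (T : V →ₗ[ℝ] V)
    (hsa : ∀ u v : V, ⟪T u, v⟫ = ⟪u, T v⟫)
    (hpd : ∀ v : V, v ≠ 0 → 0 < ⟪T v, v⟫)
    (p : ℝ[X]) (M : ℝ) (hM : 0 ≤ M)
    (hb : ∀ lam : ℝ, Module.End.HasEigenvalue (T : Module.End ℝ V) lam → |p.eval lam| ≤ M)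
    (e : V) :
    energyNorm T ((Polynomial.aeval (T : Module.End ℝ V) p) e) ≤ M * energyNorm T e := by
  have hsym : (T : V →ₗ[ℝ] V).IsSymmetric := fun x y => hsa x y
  have hn : Module.finrank ℝ V = Module.finrank ℝ V := rfl
  set d := Module.finrank ℝ V with hd
  set B := hsym.eigenvectorBasis hn with hB
  set lam := hsym.eigenvalues hn with hlam
  have key : ∀ (v : V) (i : Fin d), B.repr (T v) i = lam i * B.repr v i := fun v i =>
    hsym.eigenvectorBasis_apply_self_apply hn v i
  have hrepr : ∀ (q : ℝ[X]) (v : V) (i : Fin d),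
      B.repr ((Polynomial.aeval (T : Module.End ℝ V) q) v) i = q.eval (lam i) * B.repr v i := by
    intro q
    induction q using Polynomial.induction_on' with
    | add r s hr hs =>
      intro v i
      simp only [map_add, LinearMap.add_apply, eval_add, PiLp.add_apply, hr, hs]
      ring
    | monomial k c =>
      have hpow : ∀ (j : ℕ) (v : V) (i : Fin d),
          B.repr (((T : Module.End ℝ V) ^ j) v) i = lam i ^ j * B.repr v i := by
        intro j
        induction j with
        | zero => intro v i; simp
        | succ j ih =>
          intro v i
          rw [pow_succ', Module.End.mul_apply, key, ih]
          ring
      intro v i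
      rw [Polynomial.aeval_monomial, Module.End.mul_apply]
      rw [show ((algebraMap ℝ (Module.End ℝ V)) c) (((T : Module.End ℝ V) ^ k) v)
        = c • (((T : Module.End ℝ V) ^ k) v) from rfl]
      rw [map_smul]
      simp only [PiLp.smul_apply, smul_eq_mul, hpow, eval_monomial]
      ring
  have hinner : ∀ v w : V, ⟪v, w⟫ = ∑ i, B.repr v i * B.repr w i := by
    intro v w
    rw [← B.repr.inner_map_map v w]
    simp only [PiLp.inner_apply, RCLike.inner_apply, conj_trivial]
    exact Finset.sum_congr rfl fun i _ => mul_comm _ _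
  have henergy : ∀ v : V, ⟪T v, v⟫ = ∑ i, lam i * (B.repr v i)^2 := by
    intro v
    rw [hinner]
    exact Finset.sum_congr rfl fun i _ => by rw [key]; ring
  have hlampos : ∀ i : Fin d, 0 ≤ lam i := fun i =>
    le_of_lt (eigPos T hpd (hsym.hasEigenvalue_eigenvalues hn i))
  have hsum : ⟪T ((Polynomial.aeval (T : Module.End ℝ V) p) e),
      (Polynomial.aeval (T : Module.End ℝ V) p) e⟫ ≤ M^2 * ⟪T e, e⟫ := by
    rw [henergy, henergy, Finset.mul_sum]
    refine Finset.sum_le_sum fun i _ => ?_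
    rw [hrepr]
    have habs := hb (lam i) (hsym.hasEigenvalue_eigenvalues hn i)
    have hsq : (p.eval (lam i))^2 ≤ M^2 := sq_le_sq' (neg_le_of_abs_le habs) (le_of_abs_le habs)
    calc lam i * (p.eval (lam i) * B.repr e i)^2
        = (p.eval (lam i))^2 * (lam i * (B.repr e i)^2) := by ring
      _ ≤ M^2 * (lam i * (B.repr e i)^2) := by
          refine mul_le_mul_of_nonneg_right hsq ?_
          have := hlampos i
          positivity
      _ = M^2 * (lam i * B.repr e i ^ 2) := by ring
  unfold energyNorm
  calc Real.sqrt ⟪T ((Polynomial.aeval (T : Module.End ℝ V) p) e),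
        (Polynomial.aeval (T : Module.End ℝ V) p) e⟫
      ≤ Real.sqrt (M^2 * ⟪T e, e⟫) := Real.sqrt_le_sqrt hsum
    _ = M * Real.sqrt ⟪T e, e⟫ := by
        rw [Real.sqrt_mul (sq_nonneg M), Real.sqrt_sq hM]

end PCGAux

set_option maxHeartbeats 1600000 in
/-- PCG convergence estimate in the presence of a cluster of "bad" eigenvalues.
If the eigenvalues of the self-adjoint positive-definite operator `T` split as
`σ₀ ∪ σ₁`, where `σ₀` has `m` elements and `σ₁ ⊆ [a,b]` with `0 < a ≤ b`, then any
sequence with the conjugate-gradient optimality property satisfies, for `k ≥ m`,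
`‖u - u_k‖_T ≤ 2 K ((√(b/a) - 1)/(√(b/a) + 1))^{k-m} ‖u - u₀‖_T`, where
`K = max_{λ ∈ σ₁} ∏_{μ ∈ σ₀} |1 - λ/μ|`. -/
theorem pcg_convergence_clustered
    {V : Type*} [NormedAddCommGroup V] [InnerProductSpace ℝ V] [FiniteDimensional ℝ V]
    (T : V →ₗ[ℝ] V)
    (hsa : ∀ u v : V, ⟪T u, v⟫ = ⟪u, T v⟫)
    (hpd : ∀ v : V, v ≠ 0 → 0 < ⟪T v, v⟫)
    (σ₀ σ₁ : Finset ℝ) (m : ℕ) (hm : σ₀.card = m) (hσ₁ : σ₁.Nonempty)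
    (a b : ℝ) (ha : 0 < a) (hab : a ≤ b)
    (hσ₁ab : (σ₁ : Set ℝ) ⊆ Set.Icc a b)
    (hspec : {lam : ℝ | Module.End.HasEigenvalue (T : Module.End ℝ V) lam} =
      (σ₀ : Set ℝ) ∪ (σ₁ : Set ℝ))
    (u u₀ : V) (useq : ℕ → V) (hcg : CGOptimal T u u₀ useq) :
    ∀ k : ℕ, m ≤ k →
      energyNorm T (u - useq k) ≤
        2 * (σ₁.sup' hσ₁ fun lam => ∏ μ ∈ σ₀, |1 - lam / μ|) *
          ((Real.sqrt (b / a) - 1) / (Real.sqrt (b / a) + 1)) ^ (k - m) *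
          energyNorm T (u - u₀) := by
  classical
  open Polynomial PCGAux in
  intro k hk
  set K := σ₁.sup' hσ₁ fun lam => ∏ μ ∈ σ₀, |1 - lam / μ| with hKdef
  set t := Real.sqrt (b / a) with htdef
  set r := (t - 1) / (t + 1) with hrdef
  set n := k - m with hndef
  have hb0 : 0 < b := lt_of_lt_of_le ha hab
  have hba1 : 1 ≤ b / a := (one_le_div ha).mpr hab
  have ht1 : 1 ≤ t := by
    rw [htdef, show (1:ℝ) = Real.sqrt 1 by simp]
    exact Real.sqrt_le_sqrt hba1
  have hr0 : 0 ≤ r := div_nonneg (by linarith) (by linarith)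
  -- eigenvalues lie in σ₀ ∪ σ₁
  have hmem : ∀ lam : ℝ, Module.End.HasEigenvalue (T : Module.End ℝ V) lam →
      lam ∈ σ₀ ∨ lam ∈ σ₁ := by
    intro l hl
    have : l ∈ (σ₀ : Set ℝ) ∪ (σ₁ : Set ℝ) := by rw [← hspec]; exact hl
    simpa using this
  -- elements of σ₀ and σ₁ are positive eigenvalues
  have hσ₀pos : ∀ μ ∈ σ₀, (0:ℝ) < μ := by
    intro μ hμ
    refine eigPos T hpd ?_
    have : μ ∈ (σ₀ : Set ℝ) ∪ (σ₁ : Set ℝ) := Set.mem_union_left _ (Finset.mem_coe.mpr hμ)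
    rw [← hspec] at this
    exact this
  have hK0 : 0 ≤ K := by
    obtain ⟨x, hx⟩ := hσ₁
    exact le_trans (Finset.prod_nonneg fun _ _ => abs_nonneg _)
      (Finset.le_sup' (fun lam => ∏ μ ∈ σ₀, |1 - lam / μ|) hx)
  -- the product polynomial vanishing on σ₀
  set P0 : ℝ[X] := ∏ μ ∈ σ₀, (1 - Polynomial.C μ⁻¹ * Polynomial.X) with hP0def
  have hdeg1 : ∀ c : ℝ, (1 - Polynomial.C c * Polynomial.X).natDegree ≤ 1 := by
    intro c
    refine le_trans (natDegree_sub_le _ _) (max_le (by simp) ?_)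
    calc (Polynomial.C c * Polynomial.X).natDegree
        ≤ (Polynomial.C c).natDegree + Polynomial.X.natDegree := natDegree_mul_le
      _ ≤ 1 := by simp
  have hP0deg : P0.natDegree ≤ m := by
    refine le_trans (natDegree_prod_le _ _) ?_
    have h1 : ∑ μ ∈ σ₀, (1 - Polynomial.C μ⁻¹ * Polynomial.X).natDegree
        ≤ ∑ _μ ∈ σ₀, 1 :=
      Finset.sum_le_sum (g := fun _ => 1) fun μ _ => hdeg1 μ⁻¹
    simpa [hm] using h1
  have hP0eval : ∀ x : ℝ, P0.eval x = ∏ μ ∈ σ₀, (1 - μ⁻¹ * x) := by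
    intro x
    simp [hP0def, eval_prod]
  have hP0eval0 : P0.eval 0 = 1 := by simp [hP0eval]
  have hP0zero : ∀ μ ∈ σ₀, P0.eval μ = 0 := by
    intro μ hμ
    rw [hP0eval]
    refine Finset.prod_eq_zero hμ ?_
    rw [inv_mul_cancel₀ (ne_of_gt (hσ₀pos μ hμ))]
    ring
  have hP0K : ∀ l ∈ σ₁, |P0.eval l| ≤ K := by
    intro l hl
    have : |P0.eval l| = ∏ μ ∈ σ₀, |1 - l / μ| := by
      rw [hP0eval, Finset.abs_prod]
      exact Finset.prod_congr rfl fun μ _ => by rw [div_eq_mul_inv, mul_comm]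
    rw [this, hKdef]
    exact Finset.le_sup' (fun lam => ∏ μ ∈ σ₀, |1 - lam / μ|) hl
  -- the general reduction
  have main : ∀ p : ℝ[X], p.natDegree ≤ k → p.eval 0 = 1 →
      (∀ l : ℝ, Module.End.HasEigenvalue (T : Module.End ℝ V) l →
        |p.eval l| ≤ 2 * K * r ^ n) →
      energyNorm T (u - useq k) ≤ 2 * K * r ^ n * energyNorm T (u - u₀) := by
    intro p h1 h2 h3
    exact le_trans (hcg k p h1 h2)
      (energyPolyBound T hsa hpd p (2 * K * r ^ n) (by positivity) h3 (u - u₀))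
  rcases eq_or_lt_of_le hab with heq | hlt
  · -- degenerate case a = b
    subst heq
    have ht : t = 1 := by rw [htdef, div_self (ne_of_gt ha), Real.sqrt_one]
    have hr : r = 0 := by rw [hrdef, ht]; norm_num
    have hσ₁a : ∀ x ∈ σ₁, x = a := by
      intro x hx
      have := hσ₁ab (Finset.mem_coe.mpr hx)
      exact le_antisymm this.2 this.1
    by_cases hn0 : n = 0
    · refine main P0 (le_trans hP0deg hk) hP0eval0 ?_
      intro l hl
      rw [hn0, pow_zero, mul_one]
      rcases hmem l hl with h0 | h1
      · rw [hP0zero l h0, abs_zero]; linarith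
      · exact le_trans (hP0K l h1) (by linarith)
    · refine main ((1 - Polynomial.C a⁻¹ * Polynomial.X) * P0) ?_ ?_ ?_
      · refine le_trans natDegree_mul_le ?_
        have := hdeg1 a⁻¹
        omega
      · simp [hP0eval0]
      · intro l hl
        rw [hr, zero_pow hn0, mul_zero]
        rcases hmem l hl with h0 | h1
        · rw [eval_mul, hP0zero l h0, mul_zero, abs_zero]
        · rw [eval_mul]
          have hla : l = a := hσ₁a l h1
          have : (1 - Polynomial.C a⁻¹ * Polynomial.X).eval l = 0 := by
            simp [hla, inv_mul_cancel₀ (ne_of_gt ha)]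
          rw [this, zero_mul, abs_zero]
  · -- main case a < b
    have htq : t ^ 2 = b / a := by rw [htdef]; exact Real.sq_sqrt (by positivity)
    have hba1' : 1 < b / a := (one_lt_div ha).mpr hlt
    have ht1' : 1 < t := by nlinarith
    have h1t : t - 1 ≠ 0 := by intro h; nlinarith
    have h2t : t + 1 ≠ 0 := by intro h; nlinarith
    have hba : (0:ℝ) < b - a := by linarith
    set s := (t + 1) / (t - 1) with hsdef
    have hs1 : 1 < s := (one_lt_div (by nlinarith)).mpr (by linarith)
    have hs0 : 0 < s := lt_trans one_pos hs1
    have hsinv : s⁻¹ = r := by rw [hsdef, hrdef, inv_div]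
    have hc : (s + s⁻¹) / 2 = (a + b) / (b - a) := by
      rw [hsdef, inv_div]
      have h4 : a * t ^ 2 = b := by
        rw [htq]; field_simp
      field_simp
      ring_nf
      nlinarith [h4, sq_nonneg t]
    set Tc : ℝ := (s ^ n + (s⁻¹) ^ n) / 2 with hTcdef
    have hTceval : (Chebyshev.T ℝ (n:ℤ)).eval ((a + b) / (b - a)) = Tc := by
      rw [← hc]; exact chebEval s (ne_of_gt hs0) n
    have hTcpos : 0 < Tc := by positivity
    have hTcge : s ^ n / 2 ≤ Tc := by
      rw [hTcdef]
      have : (0:ℝ) ≤ (s⁻¹) ^ n := by positivity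
      linarith
    have hTcinv : Tc⁻¹ ≤ 2 * r ^ n := by
      rw [← hsinv]
      calc Tc⁻¹ ≤ (s ^ n / 2)⁻¹ := inv_anti₀ (by positivity) hTcge
        _ = 2 * (s⁻¹) ^ n := by rw [inv_div, div_eq_mul_inv, inv_pow]
    set q : ℝ[X] := Polynomial.C Tc⁻¹ *
      (Chebyshev.T ℝ (n:ℤ)).comp
        (Polynomial.C ((a + b) / (b - a)) - Polynomial.C (2 / (b - a)) * Polynomial.X)
      with hqdef
    have hqeval : ∀ x : ℝ, q.eval x =
        Tc⁻¹ * (Chebyshev.T ℝ (n:ℤ)).eval ((a + b) / (b - a) - 2 / (b - a) * x) := by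
      intro x
      simp [hqdef, eval_comp]
    have hqdeg : q.natDegree ≤ n := by
      rw [hqdef]
      refine le_trans (natDegree_C_mul_le _ _) (le_trans natDegree_comp_le ?_)
      calc (Chebyshev.T ℝ (n:ℤ)).natDegree *
            (Polynomial.C ((a + b) / (b - a)) - Polynomial.C (2 / (b - a)) * Polynomial.X).natDegree
          ≤ n * 1 := by
            refine Nat.mul_le_mul (chebDegLe n) ?_
            refine le_trans (natDegree_sub_le _ _) (max_le (by simp) ?_)
            calc (Polynomial.C (2 / (b - a)) * Polynomial.X).natDegree
                ≤ (Polynomial.C (2 / (b - a))).natDegree + Polynomial.X.natDegree :=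
                  natDegree_mul_le
              _ ≤ 1 := by simp
        _ = n := by omega
    have hq0 : q.eval 0 = 1 := by
      rw [hqeval]
      simp only [mul_zero, sub_zero]
      rw [hTceval]
      exact inv_mul_cancel₀ (ne_of_gt hTcpos)
    have hqbound : ∀ l : ℝ, l ∈ Set.Icc a b → |q.eval l| ≤ 2 * r ^ n := by
      intro l hl
      rw [hqeval, abs_mul, abs_of_pos (inv_pos.mpr hTcpos)]
      have harg : (a + b) / (b - a) - 2 / (b - a) * l = (a + b - 2 * l) / (b - a) := by ring
      have hy : (a + b) / (b - a) - 2 / (b - a) * l ∈ Set.Icc (-1:ℝ) 1 := by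
        rw [harg]
        constructor
        · rw [le_div_iff₀ hba]; linarith [hl.2]
        · rw [div_le_one hba]; linarith [hl.1]
      calc Tc⁻¹ * |(Chebyshev.T ℝ (n:ℤ)).eval ((a + b) / (b - a) - 2 / (b - a) * l)|
          ≤ Tc⁻¹ * 1 := by
            refine mul_le_mul_of_nonneg_left (chebAbsLe (n:ℤ) _ hy) ?_
            positivity
        _ = Tc⁻¹ := mul_one _
        _ ≤ 2 * r ^ n := hTcinv
    refine main (q * P0) ?_ ?_ ?_
    · refine le_trans natDegree_mul_le ?_
      have := Nat.sub_add_cancel hk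
      omega
    · rw [eval_mul, hq0, hP0eval0, one_mul]
    · intro l hl
      rcases hmem l hl with h0 | h1
      · rw [eval_mul, hP0zero l h0, mul_zero, abs_zero]
        positivity
      · have hlab : l ∈ Set.Icc a b := hσ₁ab (Finset.mem_coe.mpr h1)
        rw [eval_mul, abs_mul]
        calc |q.eval l| * |P0.eval l|
            ≤ (2 * r ^ n) * K := by
              refine mul_le_mul (hqbound l hlab) (hP0K l h1) (abs_nonneg _) (by positivity)
          _ = 2 * K * r ^ n := by ring
end

section
/- Let V be a finite-dimensional real inner product space of dimension n and T : V → V a self-adjoint positive-definite linear operator with eigenvalues, listed with multiplicity, ordered 0 < λ₁ ≤ λ₂ ≤ ⋯ ≤ λₙ. Let m_b be an integer with 0 ≤ m_b < n. Let u, u₀ ∈ V and let (u_k) be a sequence in V having the conjugate-gradient optimality property for target u and initial guess u₀ with respect to T. Then for every integer k ≥ m_b, ‖u − u_k‖_T ≤ 2 ((√(λ_{n−m_b}/λ₁) − 1)/(√(λ_{n−m_b}/λ₁) + 1))^{k−m_b} ‖u − u₀‖_T. -/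
open RealInnerProductSpace

section Aux
open Polynomial

/- Chebyshev auxiliary lemmas -/
theorem cheb_natDegree : ∀ m : ℕ, (Chebyshev.T ℝ (m : ℤ)).natDegree ≤ m
  | 0 => by simp [Chebyshev.T_zero]
  | 1 => by simp [Chebyshev.T_one]
  | (m+2) => by
    have h1 := cheb_natDegree m
    have h2 := cheb_natDegree (m+1)
    push_cast
    rw [Chebyshev.T_add_two]
    refine le_trans (natDegree_sub_le _ _) (max_le ?_ ?_)
    · refine le_trans (natDegree_mul_le) ?_
      have : (2 * X : ℝ[X]).natDegree ≤ 1 := by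
        refine le_trans natDegree_mul_le ?_; simp
      push_cast at h2
      omega
    · omega

theorem cheb_eval_half (s : ℝ) (hs : s ≠ 0) :
    ∀ m : ℕ, (Chebyshev.T ℝ (m : ℤ)).eval ((s + s⁻¹)/2) = (s^m + s⁻¹^m)/2
  | 0 => by simp [Chebyshev.T_zero]
  | 1 => by simp [Chebyshev.T_one]
  | (m+2) => by
    have h1 := cheb_eval_half s hs m
    have h2 := cheb_eval_half s hs (m+1)
    push_cast
    rw [Chebyshev.T_add_two]
    simp only [eval_sub, eval_mul, eval_ofNat, eval_X]
    push_cast at h1 h2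
    rw [h1, h2]
    simp only [inv_pow]
    field_simp
    ring

theorem cheb_abs_le (m : ℕ) (t : ℝ) (ht : |t| ≤ 1) : |(Chebyshev.T ℝ (m : ℤ)).eval t| ≤ 1 := by
  rw [abs_le] at ht
  have : t = Real.cos (Real.arccos t) := (Real.cos_arccos ht.1 ht.2).symm
  rw [this, Chebyshev.T_real_cos]
  exact Real.abs_cos_le_one _

section Key
variable {V : Type*} [NormedAddCommGroup V] [InnerProductSpace ℝ V]
    {n : ℕ} (T : V →ₗ[ℝ] V)
    (hsa : ∀ u v : V, ⟪T u, v⟫ = ⟪u, T v⟫)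
    (lam : Fin n → ℝ)
    (bas : OrthonormalBasis (Fin n) ℝ V)
    (hb : ∀ i : Fin n, T (bas i) = lam i • bas i)

include hsa hb

theorem inner_T_basis (w : V) (i : Fin n) : ⟪bas i, T w⟫ = lam i * ⟪bas i, w⟫ := by
  rw [← hsa, hb, real_inner_smul_left]

theorem inner_pow_basis (w : V) (i : Fin n) (m : ℕ) :
    ⟪bas i, (T^m) w⟫ = lam i ^ m * ⟪bas i, w⟫ := by
  induction m generalizing w with
  | zero => simp
  | succ m ih =>
    rw [pow_succ, Module.End.mul_apply, ih (T w), inner_T_basis T hsa lam bas hb, pow_succ]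
    ring

theorem inner_aeval_basis (p : Polynomial ℝ) (w : V) (i : Fin n) :
    ⟪bas i, (Polynomial.aeval (T : Module.End ℝ V) p) w⟫ = p.eval (lam i) * ⟪bas i, w⟫ := by
  induction p using Polynomial.induction_on' with
  | add p q hp hq => simp [map_add, LinearMap.add_apply, inner_add_right, hp, hq]; ring
  | monomial m a =>
    rw [Polynomial.aeval_monomial]
    rw [Module.End.mul_apply]
    rw [Module.algebraMap_end_apply, real_inner_smul_right, inner_pow_basis T hsa lam bas hb]
    simp [Polynomial.eval_monomial]
    ring

theorem energy_sq (w : V) : ⟪T w, w⟫ = ∑ i, lam i * ⟪bas i, w⟫^2 := by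
  rw [← bas.sum_inner_mul_inner (T w) w]
  refine Finset.sum_congr rfl fun i _ => ?_
  have h : ⟪T w, bas i⟫ = lam i * ⟪bas i, w⟫ := by
    rw [hsa, hb, real_inner_smul_right, real_inner_comm]
  rw [h]; ring

theorem key_estimate (hpos : ∀ i, 0 < lam i) (p : Polynomial ℝ) (M : ℝ) (hM : 0 ≤ M)
    (hev : ∀ i, |p.eval (lam i)| ≤ M) (v : V) :
    energyNorm T ((Polynomial.aeval (T : Module.End ℝ V) p) v) ≤ M * energyNorm T v := by
  unfold energyNorm
  rw [energy_sq T hsa lam bas hb, energy_sq T hsa lam bas hb]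
  have hle : ∑ i, lam i * ⟪bas i, (Polynomial.aeval (T : Module.End ℝ V) p) v⟫^2
      ≤ M^2 * ∑ i, lam i * ⟪bas i, v⟫^2 := by
    rw [Finset.mul_sum]
    refine Finset.sum_le_sum fun i _ => ?_
    rw [inner_aeval_basis T hsa lam bas hb]
    have h1 : (p.eval (lam i))^2 ≤ M^2 := by
      rw [← sq_abs]; exact pow_le_pow_left₀ (abs_nonneg _) (hev i) 2
    have h2 : 0 ≤ lam i * ⟪bas i, v⟫^2 := mul_nonneg (hpos i).le (sq_nonneg _)
    calc lam i * (p.eval (lam i) * ⟪bas i, v⟫)^2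
        = (p.eval (lam i))^2 * (lam i * ⟪bas i, v⟫^2) := by ring
      _ ≤ M^2 * (lam i * ⟪bas i, v⟫^2) := by nlinarith
  calc Real.sqrt (∑ i, lam i * ⟪bas i, (Polynomial.aeval (T : Module.End ℝ V) p) v⟫^2)
      ≤ Real.sqrt (M^2 * ∑ i, lam i * ⟪bas i, v⟫^2) := Real.sqrt_le_sqrt hle
    _ = M * Real.sqrt (∑ i, lam i * ⟪bas i, v⟫^2) := by
        rw [Real.sqrt_mul (sq_nonneg M), Real.sqrt_sq hM]

end Key

end Aux

open Polynomial

/-- PCG convergence estimate in terms of the `m_b`-th effective condition number.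
If the eigenvalues of the self-adjoint positive-definite operator `T` on an
`n`-dimensional space, listed with multiplicity (encoded by an orthonormal basis of
eigenvectors), are ordered `0 < λ₁ ≤ ⋯ ≤ λₙ`, and `0 ≤ m_b < n`, then any sequence
with the conjugate-gradient optimality property satisfies, for `k ≥ m_b`,
`‖u - u_k‖_T ≤ 2 ((√(λ_{n-m_b}/λ₁) - 1)/(√(λ_{n-m_b}/λ₁) + 1))^{k-m_b} ‖u - u₀‖_T`. -/
theorem pcg_convergence_effective_condition_number
    {V : Type*} [NormedAddCommGroup V] [InnerProductSpace ℝ V]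
    (n : ℕ) (T : V →ₗ[ℝ] V)
    (hsa : ∀ u v : V, ⟪T u, v⟫ = ⟪u, T v⟫)
    (hpd : ∀ v : V, v ≠ 0 → 0 < ⟪T v, v⟫)
    (lam : Fin n → ℝ) (hmono : Monotone lam)
    (hpos : ∀ i, 0 < lam i)
    (bas : OrthonormalBasis (Fin n) ℝ V)
    (hb : ∀ i : Fin n, T (bas i) = lam i • bas i)
    (mb : ℕ) (hmb : mb < n)
    (u u₀ : V) (useq : ℕ → V) (hcg : CGOptimal T u u₀ useq) :
    ∀ k : ℕ, mb ≤ k →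
      energyNorm T (u - useq k) ≤
        2 * ((Real.sqrt (lam ⟨n - mb - 1, by omega⟩ / lam ⟨0, by omega⟩) - 1) /
              (Real.sqrt (lam ⟨n - mb - 1, by omega⟩ / lam ⟨0, by omega⟩) + 1)) ^ (k - mb) *
          energyNorm T (u - u₀) := by
  intro k hk
  have h0n : 0 < n := by omega
  have hbn : n - mb - 1 < n := by omega
  set i0 : Fin n := ⟨0, h0n⟩ with hi0def
  set ib : Fin n := ⟨n - mb - 1, hbn⟩ with hibdef
  set a := lam i0 with hadef
  set b := lam ib with hbdef
  set s1 := Real.sqrt (b / a) with hs1def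
  set σ := (s1 - 1) / (s1 + 1) with hσdef
  set m := k - mb with hmdef
  suffices H : energyNorm T (u - useq k) ≤ 2 * σ ^ m * energyNorm T (u - u₀) by
    exact H
  -- basic facts
  have ha : 0 < a := hpos i0
  have hble : a ≤ b := hmono (by simp [Fin.le_def, hi0def, hibdef])
  have hlo : ∀ i : Fin n, a ≤ lam i := fun i => hmono (by simp [Fin.le_def, hi0def])
  have hhi : ∀ i : Fin n, i.val < n - mb → lam i ≤ b := fun i hi =>
    hmono (by simp [Fin.le_def, hibdef]; omega)
  have hs1ge : 1 ≤ s1 := by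
    rw [hs1def, show (1:ℝ) = Real.sqrt 1 by simp]
    exact Real.sqrt_le_sqrt ((one_le_div ha).2 hble)
  have hσ0 : 0 ≤ σ := div_nonneg (by linarith) (by linarith)
  have hM0 : 0 ≤ 2 * σ ^ m := by positivity
  -- the product polynomial q killing the top mb eigenvalues
  set q : Polynomial ℝ :=
    ∏ j ∈ Finset.range mb, (1 - Polynomial.C (lam ⟨n - 1 - j, by omega⟩)⁻¹ * Polynomial.X)
    with hqdef
  have hqdeg : q.natDegree ≤ mb := by
    refine le_trans (natDegree_prod_le _ _) ?_
    refine le_trans (Finset.sum_le_sum (fun j _ =>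
      (show (1 - Polynomial.C (lam ⟨n - 1 - j, by omega⟩)⁻¹ * Polynomial.X :
        Polynomial ℝ).natDegree ≤ 1 by compute_degree))) ?_
    simp
  have hq0 : q.eval 0 = 1 := by
    simp [hqdef, eval_prod]
  have hqbig : ∀ i : Fin n, n - mb ≤ i.val → q.eval (lam i) = 0 := by
    intro i hi
    have hiv := i.isLt
    rw [hqdef, eval_prod]
    have hmem : n - 1 - i.val ∈ Finset.range mb := Finset.mem_range.2 (by omega)
    refine Finset.prod_eq_zero hmem ?_
    have hidx : (⟨n - 1 - (n - 1 - i.val), by omega⟩ : Fin n) = i :=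
      Fin.ext (show n - 1 - (n - 1 - i.val) = i.val by omega)
    simp only [eval_sub, eval_one, eval_mul, eval_C, eval_X, hidx]
    rw [inv_mul_cancel₀ (hpos i).ne']
    ring
  have hfacts : ∀ i : Fin n, i.val < n - mb → ∀ j ∈ Finset.range mb,
      0 ≤ 1 - (lam ⟨n - 1 - j, by omega⟩)⁻¹ * lam i ∧
      1 - (lam ⟨n - 1 - j, by omega⟩)⁻¹ * lam i ≤ 1 := by
    intro i hi j hj
    rw [Finset.mem_range] at hj
    have hry : lam i ≤ lam ⟨n - 1 - j, by omega⟩ := hmono (by simp [Fin.le_def]; omega)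
    have hrp : 0 < lam ⟨n - 1 - j, by omega⟩ := hpos _
    constructor
    · have : (lam ⟨n - 1 - j, by omega⟩)⁻¹ * lam i ≤ 1 := by
        rw [← div_eq_inv_mul, div_le_one hrp]; exact hry
      linarith
    · have : 0 < (lam ⟨n - 1 - j, by omega⟩)⁻¹ * lam i :=
        mul_pos (inv_pos.2 hrp) (hpos i)
      linarith
  have hqsmall : ∀ i : Fin n, i.val < n - mb →
      0 ≤ q.eval (lam i) ∧ q.eval (lam i) ≤ 1 := by
    intro i hi
    rw [hqdef, eval_prod]
    simp only [eval_sub, eval_one, eval_mul, eval_C, eval_X]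
    constructor
    · exact Finset.prod_nonneg (fun j hj => (hfacts i hi j hj).1)
    · exact Finset.prod_le_one (fun j hj => (hfacts i hi j hj).1)
        (fun j hj => (hfacts i hi j hj).2)
  -- main case split
  rcases eq_or_lt_of_le hble with hab | hab
  · -- degenerate case a = b
    have hs1eq : s1 = 1 := by
      rw [hs1def, ← hab, div_self ha.ne', Real.sqrt_one]
    have hσeq : σ = 0 := by rw [hσdef, hs1eq]; norm_num
    have hlameq : ∀ i : Fin n, i.val < n - mb → lam i = a := fun i hi =>
      le_antisymm (hab ▸ hhi i hi) (hlo i)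
    set r : Polynomial ℝ := (1 - Polynomial.C a⁻¹ * Polynomial.X) ^ m with hrdef
    set p : Polynomial ℝ := q * r with hpdef
    have hp0 : p.eval 0 = 1 := by simp [hpdef, hrdef, hq0]
    have hrdeg : r.natDegree ≤ m := by
      rw [hrdef]
      refine le_trans natDegree_pow_le ?_
      have h1 : (1 - Polynomial.C a⁻¹ * Polynomial.X : Polynomial ℝ).natDegree ≤ 1 := by
        compute_degree
      calc m * (1 - Polynomial.C a⁻¹ * Polynomial.X : Polynomial ℝ).natDegree
          ≤ m * 1 := Nat.mul_le_mul_left m h1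
        _ = m := by omega
    have hpdeg : p.natDegree ≤ k := by
      rw [hpdef]
      refine le_trans natDegree_mul_le (le_trans (add_le_add hqdeg hrdeg) ?_)
      omega
    have hev : ∀ i, |p.eval (lam i)| ≤ 2 * σ ^ m := by
      intro i
      rcases lt_or_ge i.val (n - mb) with hi | hi
      · rcases Nat.eq_zero_or_pos m with hm | hm
        · rw [hm, pow_zero, mul_one]
          rw [hpdef, eval_mul, hrdef, hm, pow_zero, eval_one, mul_one]
          rw [abs_of_nonneg (hqsmall i hi).1]
          linarith [(hqsmall i hi).2]
        · have : r.eval (lam i) = 0 := by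
            rw [hrdef, eval_pow]
            simp only [eval_sub, eval_one, eval_mul, eval_C, eval_X]
            rw [hlameq i hi, inv_mul_cancel₀ ha.ne', sub_self, zero_pow hm.ne']
          rw [hpdef, eval_mul, this, mul_zero, abs_zero]
          positivity
      · rw [hpdef, eval_mul, hqbig i hi, zero_mul, abs_zero]
        positivity
    calc energyNorm T (u - useq k) ≤
        energyNorm T ((Polynomial.aeval (T : Module.End ℝ V) p) (u - u₀)) :=
          hcg k p hpdeg hp0
      _ ≤ 2 * σ ^ m * energyNorm T (u - u₀) :=
          key_estimate T hsa lam bas hb hpos p _ hM0 hev _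
  · -- Chebyshev case a < b
    have hba : 0 < b - a := by linarith
    have hκ : 1 < b / a := (one_lt_div ha).2 hab
    have hs1 : 1 < s1 := by
      rw [hs1def, show (1:ℝ) = Real.sqrt 1 by simp]
      exact Real.sqrt_lt_sqrt (by norm_num) hκ
    set s : ℝ := (s1 + 1) / (s1 - 1) with hsdef
    have hs1m : (0:ℝ) < s1 - 1 := by linarith
    have hs1p : (0:ℝ) < s1 + 1 := by linarith
    have hspos : 0 < s := div_pos hs1p hs1m
    have hσs : σ = s⁻¹ := by rw [hσdef, hsdef, inv_div]
    have hs1sq : s1 ^ 2 = b / a := Real.sq_sqrt (by positivity)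
    have hsq1 : s1 ^ 2 - 1 ≠ 0 := by nlinarith
    have hc : (s + s⁻¹) / 2 = (b + a) / (b - a) := by
      have e1 : s + s⁻¹ = (2 * s1 ^ 2 + 2) / (s1 ^ 2 - 1) := by
        rw [hsdef]
        rw [inv_div]
        rw [div_add_div _ _ hs1m.ne' hs1p.ne']
        rw [div_eq_div_iff (by positivity) hsq1]
        ring
      rw [e1, hs1sq]
      have h5 : b / a - 1 ≠ 0 := ne_of_gt (by linarith)
      field_simp
    set TC : ℝ := (Chebyshev.T ℝ (m : ℤ)).eval ((b + a) / (b - a)) with hTCdef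
    have hTCval : TC = (s ^ m + s⁻¹ ^ m) / 2 := by
      rw [hTCdef, ← hc]; exact cheb_eval_half s hspos.ne' m
    have hTCpos : 0 < TC := by rw [hTCval]; positivity
    have hTCge : s ^ m / 2 ≤ TC := by
      rw [hTCval]
      have : (0:ℝ) ≤ s⁻¹ ^ m := by positivity
      linarith
    have hTCinv : TC⁻¹ ≤ 2 * σ ^ m := by
      have h1 : TC⁻¹ ≤ (s ^ m / 2)⁻¹ := by
        apply inv_anti₀ (by positivity) hTCge
      have h2 : (s ^ m / 2)⁻¹ = 2 * σ ^ m := by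
        rw [hσs, inv_pow, inv_div, div_eq_mul_inv]
      exact h2 ▸ h1
    set L : Polynomial ℝ :=
      Polynomial.C ((b + a) / (b - a)) - Polynomial.C (2 / (b - a)) * Polynomial.X with hLdef
    set r : Polynomial ℝ := Polynomial.C TC⁻¹ * ((Chebyshev.T ℝ (m : ℤ)).comp L) with hrdef
    set p : Polynomial ℝ := q * r with hpdef
    have hL0 : L.eval 0 = (b + a) / (b - a) := by simp [hLdef]
    have hp0 : p.eval 0 = 1 := by
      rw [hpdef, eval_mul, hq0, one_mul, hrdef, eval_mul, eval_C, eval_comp, hL0]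
      exact inv_mul_cancel₀ hTCpos.ne'
    have hrdeg : r.natDegree ≤ m := by
      rw [hrdef]
      refine le_trans natDegree_mul_le ?_
      rw [natDegree_C, zero_add]
      refine le_trans natDegree_comp_le ?_
      have hLdeg : L.natDegree ≤ 1 := by rw [hLdef]; compute_degree
      calc (Chebyshev.T ℝ (m : ℤ)).natDegree * L.natDegree
          ≤ m * 1 := Nat.mul_le_mul (cheb_natDegree m) hLdeg
        _ = m := by omega
    have hpdeg : p.natDegree ≤ k := by
      rw [hpdef]
      refine le_trans natDegree_mul_le (le_trans (add_le_add hqdeg hrdeg) ?_)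
      omega
    have hev : ∀ i, |p.eval (lam i)| ≤ 2 * σ ^ m := by
      intro i
      rcases lt_or_ge i.val (n - mb) with hi | hi
      · have hy : L.eval (lam i) = (b + a - 2 * lam i) / (b - a) := by
          simp [hLdef]; ring
        have hyabs : |L.eval (lam i)| ≤ 1 := by
          rw [hy, abs_le]
          constructor
          · rw [le_div_iff₀ hba]
            have := hhi i hi
            linarith
          · rw [div_le_one hba]
            have := hlo i
            linarith
        have hrabs : |r.eval (lam i)| ≤ TC⁻¹ := by
          rw [hrdef, eval_mul, eval_C, eval_comp, abs_mul,
            abs_of_nonneg (inv_nonneg.2 hTCpos.le)]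
          calc TC⁻¹ * |(Chebyshev.T ℝ (m : ℤ)).eval (L.eval (lam i))|
              ≤ TC⁻¹ * 1 := by
                exact mul_le_mul_of_nonneg_left (cheb_abs_le m _ hyabs)
                  (inv_nonneg.2 hTCpos.le)
            _ = TC⁻¹ := mul_one _
        rw [hpdef, eval_mul, abs_mul]
        calc |q.eval (lam i)| * |r.eval (lam i)|
            ≤ 1 * TC⁻¹ := by
              refine mul_le_mul ?_ hrabs (abs_nonneg _) (by norm_num)
              rw [abs_of_nonneg (hqsmall i hi).1]; exact (hqsmall i hi).2
          _ = TC⁻¹ := one_mul _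
          _ ≤ 2 * σ ^ m := hTCinv
      · rw [hpdef, eval_mul, hqbig i hi, zero_mul, abs_zero]
        positivity
    calc energyNorm T (u - useq k) ≤
        energyNorm T ((Polynomial.aeval (T : Module.End ℝ V) p) (u - u₀)) :=
          hcg k p hpdeg hp0
      _ ≤ 2 * σ ^ m * energyNorm T (u - u₀) :=
          key_estimate T hsa lam bas hb hpos p _ hM0 hev _
end

section
/- Let a, b be real numbers with 0 < a ≤ b and let k ≥ 0 be an integer. Then there exists a real polynomial p with deg p ≤ k and p(0) = 1 such that |p(λ)| ≤ 2 ((√(b/a) − 1)/(√(b/a) + 1))^k for every λ ∈ [a, b]. -/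
open Polynomial Polynomial.Chebyshev

lemma T_real_cosh' (n : ℤ) (t : ℝ) :
    (T ℝ n).eval (Real.cosh t) = Real.cosh (n * t) := by
  have h := Polynomial.Chebyshev.T_complex_cos ((t : ℂ) * Complex.I) n
  rw [Complex.cos_mul_I, ← Complex.ofReal_cosh] at h
  have h2 : (n : ℂ) * ((t : ℂ) * Complex.I) = ((n * t : ℝ) : ℂ) * Complex.I := by
    push_cast; ring
  rw [h2, Complex.cos_mul_I, ← Complex.ofReal_cosh] at h
  have := Polynomial.Chebyshev.complex_ofReal_eval_T (Real.cosh t) n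
  rw [h] at this
  exact_mod_cast this

lemma natDegree_T_le' (k : ℕ) : (T ℝ (k : ℤ)).natDegree ≤ k := by
  induction k using Nat.strong_induction_on with
  | _ k ih =>
    match k with
    | 0 => simp [Polynomial.Chebyshev.T_zero]
    | 1 => simp [Polynomial.Chebyshev.T_one]
    | (n+2) =>
      have h : T ℝ ((n : ℤ) + 2) = 2 * X * T ℝ ((n : ℤ) + 1) - T ℝ (n : ℤ) :=
        Polynomial.Chebyshev.T_add_two ℝ n
      have h1 : ((n : ℤ) + 2) = ((n + 2 : ℕ) : ℤ) := by push_cast; ring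
      have h2 : ((n : ℤ) + 1) = ((n + 1 : ℕ) : ℤ) := by push_cast; ring
      rw [h1, h2] at h
      rw [h]
      refine le_trans (Polynomial.natDegree_sub_le _ _) ?_
      have b1 : (2 * X * T ℝ ((n+1 : ℕ) : ℤ)).natDegree ≤ n + 2 := by
        refine le_trans (Polynomial.natDegree_mul_le) ?_
        have h3 : (2 * X : Polynomial ℝ).natDegree ≤ 1 := by
          refine le_trans (Polynomial.natDegree_mul_le) ?_
          simp
        have := ih (n+1) (by omega)
        omega
      have b2 : (T ℝ ((n : ℕ) : ℤ)).natDegree ≤ n + 2 :=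
        le_trans (ih n (by omega)) (by omega)
      omega

lemma abs_T_le_one' (n : ℤ) (y : ℝ) (hy : y ∈ Set.Icc (-1 : ℝ) 1) :
    |(T ℝ n).eval y| ≤ 1 := by
  have : y = Real.cos (Real.arccos y) := (Real.cos_arccos hy.1 hy.2).symm
  rw [this, Polynomial.Chebyshev.T_real_cos]
  exact Real.abs_cos_le_one _

/-- Chebyshev-polynomial bound: for `0 < a ≤ b` and every integer `k ≥ 0` there is a
real polynomial `p` with `deg p ≤ k` and `p(0) = 1` such that
`|p(λ)| ≤ 2 ((√(b/a) - 1)/(√(b/a) + 1))^k` for every `λ ∈ [a, b]`. -/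
theorem chebyshev_bound (a b : ℝ) (ha : 0 < a) (hab : a ≤ b) (k : ℕ) :
    ∃ p : Polynomial ℝ, p.natDegree ≤ k ∧ p.eval 0 = 1 ∧
      ∀ lam ∈ Set.Icc a b,
        |p.eval lam| ≤ 2 * ((Real.sqrt (b / a) - 1) / (Real.sqrt (b / a) + 1)) ^ k := by
  rcases eq_or_lt_of_le hab with heq | hlt
  · -- a = b
    subst heq
    have hr : (Real.sqrt (a / a) - 1) / (Real.sqrt (a / a) + 1) = 0 := by
      rw [div_self ha.ne', Real.sqrt_one]; norm_num
    rcases Nat.eq_zero_or_pos k with hk | hk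
    · subst hk
      exact ⟨1, by simp, by simp, fun lam _ => by simp⟩
    · refine ⟨1 - C a⁻¹ * X, ?_, by simp, ?_⟩
      · refine le_trans (Polynomial.natDegree_sub_le _ _) ?_
        have h1 : (C a⁻¹ * X : Polynomial ℝ).natDegree ≤ 1 :=
          le_trans Polynomial.natDegree_mul_le (by simp)
        exact le_trans (max_le (by simp) h1) hk
      · intro lam hlam
        have : lam = a := le_antisymm hlam.2 hlam.1
        subst this
        rw [hr, zero_pow hk.ne', mul_zero]
        simp [inv_mul_cancel₀ ha.ne']
        
  · -- a < b
    have hba : 0 < b - a := sub_pos.mpr hlt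
    set s := Real.sqrt (b / a) with hs_def
    have hba' : 1 < b / a := (one_lt_div ha).mpr hlt
    have hs1 : 1 < s := by
      rw [hs_def, show (1:ℝ) = Real.sqrt 1 by simp]
      exact Real.sqrt_lt_sqrt (by norm_num) hba'
    have hs0 : 0 < s - 1 := sub_pos.mpr hs1
    have hs0' : 0 < s + 1 := by linarith
    have hssq : s ^ 2 = b / a := Real.sq_sqrt (by positivity)
    set μ := (a + b) / (b - a) with hμ_def
    set t := Real.log ((s + 1) / (s - 1)) with ht_def
    have hexp : Real.exp t = (s + 1) / (s - 1) := Real.exp_log (by positivity)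
    have hexp' : Real.exp (-t) = (s - 1) / (s + 1) := by
      rw [Real.exp_neg, hexp, inv_div]
    have hb_eq : b = a * s ^ 2 := by
      rw [hssq]; field_simp
    have hsq_ne : s ^ 2 - 1 ≠ 0 := by nlinarith
    have hcosh : Real.cosh t = μ := by
      rw [Real.cosh_eq, hexp, hexp', hμ_def]
      have e1 : ((s+1)/(s-1) + (s-1)/(s+1))/2 = (s^2+1)/(s^2-1) := by
        field_simp
        ring
      have e2 : (a+b)/(b-a) = (s^2+1)/(s^2-1) := by
        rw [hb_eq]
        rw [div_eq_div_iff (by nlinarith) hsq_ne]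
        ring
      rw [e1, e2]
    set Tμ := (T ℝ (k : ℤ)).eval μ with hTμ_def
    have hTμ_eq : Tμ = Real.cosh (k * t) := by
      rw [hTμ_def, ← hcosh, T_real_cosh']
      norm_num
    set r := (s - 1) / (s + 1) with hr_def
    have hr0 : 0 < r := div_pos hs0 hs0'
    have hTμ_ge : ((s + 1) / (s - 1)) ^ k / 2 ≤ Tμ := by
      rw [hTμ_eq, Real.cosh_eq]
      have h1 : Real.exp (k * t) = ((s + 1) / (s - 1)) ^ k := by
        rw [Real.exp_nat_mul, hexp]
      rw [h1]
      nlinarith [Real.exp_pos (-((k:ℝ) * t))]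
    have hTμ_pos : 0 < Tμ :=
      lt_of_lt_of_le (by positivity) hTμ_ge
    have hc_le : Tμ⁻¹ ≤ 2 * r ^ k := by
      have h1 : Tμ⁻¹ ≤ (((s + 1) / (s - 1)) ^ k / 2)⁻¹ :=
        inv_anti₀ (by positivity) hTμ_ge
      refine le_trans h1 (le_of_eq ?_)
      rw [hr_def, inv_div, div_eq_mul_inv, ← inv_pow, inv_div]
    have hTμ_ne : Tμ ≠ 0 := hTμ_pos.ne'
    set l : Polynomial ℝ := C μ + C (-(2/(b-a))) * X with hl_def
    refine ⟨C Tμ⁻¹ * ((T ℝ (k:ℤ)).comp l), ?_, ?_, ?_⟩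
    · refine le_trans Polynomial.natDegree_mul_le ?_
      have h1 : (C Tμ⁻¹ : Polynomial ℝ).natDegree = 0 := Polynomial.natDegree_C _
      have h2 : ((T ℝ (k:ℤ)).comp l).natDegree ≤ k := by
        refine le_trans (Polynomial.natDegree_comp_le) ?_
        have hl1 : l.natDegree ≤ 1 := by
          refine le_trans (Polynomial.natDegree_add_le _ _) (max_le (by simp) ?_)
          exact le_trans Polynomial.natDegree_mul_le (by simp)
        calc (T ℝ (k:ℤ)).natDegree * l.natDegree ≤ k * 1 :=
              Nat.mul_le_mul (natDegree_T_le' k) hl1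
          _ = k := by omega
      omega
    · have hl0 : l.eval 0 = μ := by simp [hl_def]
      rw [Polynomial.eval_mul, Polynomial.eval_C, Polynomial.eval_comp, hl0,
        ← hTμ_def, inv_mul_cancel₀ hTμ_ne]
    · intro lam hlam
      have hy_eq : l.eval lam = (a + b - 2*lam) / (b - a) := by
        simp only [hl_def, Polynomial.eval_add, Polynomial.eval_mul, Polynomial.eval_C,
          Polynomial.eval_X, hμ_def]
        field_simp
        ring
      have hy_mem : l.eval lam ∈ Set.Icc (-1:ℝ) 1 := by
        rw [hy_eq]
        constructor
        · rw [le_div_iff₀ hba]; linarith [hlam.2]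
        · rw [div_le_one hba]; linarith [hlam.1]
      rw [Polynomial.eval_mul, Polynomial.eval_C, Polynomial.eval_comp, abs_mul,
        abs_of_pos (inv_pos.mpr hTμ_pos)]
      calc Tμ⁻¹ * |(T ℝ (k:ℤ)).eval (l.eval lam)|
          ≤ Tμ⁻¹ * 1 := by
            exact mul_le_mul_of_nonneg_left (abs_T_le_one' _ _ hy_mem)
              (inv_pos.mpr hTμ_pos).le
        _ = Tμ⁻¹ := mul_one _
        _ ≤ 2 * r ^ k := hc_le
end

section
/- Let a, b be real numbers with 0 < a ≤ b, let σ₀ be a finite subset of (0, ∞) with m elements, and let k ≥ m be an integer. Then there exists a real polynomial p with deg p ≤ k and p(0) = 1 such that p(μ) = 0 for every μ ∈ σ₀, and |p(λ)| ≤ 2 (∏_{μ ∈ σ₀} |1 − λ/μ|) ((√(b/a) − 1)/(√(b/a) + 1))^{k−m} for every λ ∈ [a, b]. -/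
open Polynomial Real

private lemma natDegree_T_le (n : ℕ) : (Polynomial.Chebyshev.T ℝ (n : ℤ)).natDegree ≤ n := by
  induction n using Nat.strong_induction_on with
  | _ n ih =>
    match n with
    | 0 => simp [Polynomial.Chebyshev.T_zero]
    | 1 => simp [Polynomial.Chebyshev.T_one]
    | (n+2) =>
      have h : ((n+2 : ℕ) : ℤ) = (n : ℤ) + 2 := by push_cast; ring
      rw [h, Polynomial.Chebyshev.T_add_two]
      refine le_trans (Polynomial.natDegree_sub_le _ _) (max_le ?_ ?_)
      · refine le_trans Polynomial.natDegree_mul_le ?_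
        have h1 : ((2 : ℝ[X]) * Polynomial.X).natDegree ≤ 1 := by compute_degree
        have h2 := ih (n+1) (by omega)
        have h3 : ((n+1 : ℕ) : ℤ) = (n : ℤ) + 1 := by push_cast; ring
        rw [h3] at h2
        omega
      · have := ih n (by omega); omega

private lemma T_cosh (t : ℝ) (n : ℤ) :
    (Polynomial.Chebyshev.T ℝ n).eval (Real.cosh t) = Real.cosh (n * t) := by
  have key := Polynomial.Chebyshev.T_complex_cos ((t : ℂ) * Complex.I) n
  rw [Complex.cos_mul_I, ← Complex.ofReal_cosh,
    ← Polynomial.Chebyshev.complex_ofReal_eval_T] at key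
  have h2 : (n : ℂ) * ((t : ℂ) * Complex.I) = ((n * t : ℝ) : ℂ) * Complex.I := by
    push_cast; ring
  rw [h2, Complex.cos_mul_I, ← Complex.ofReal_cosh] at key
  exact_mod_cast key

private lemma abs_T_le {x : ℝ} (h1 : -1 ≤ x) (h2 : x ≤ 1) (n : ℤ) :
    |(Polynomial.Chebyshev.T ℝ n).eval x| ≤ 1 := by
  rw [← Real.cos_arccos h1 h2, Polynomial.Chebyshev.T_real_cos]
  exact Real.abs_cos_le_one _

set_option maxHeartbeats 1000000 in

/-- Chebyshev-polynomial bound with prescribed roots: for `0 < a ≤ b`, a finite set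
`σ₀ ⊆ (0, ∞)` with `m` elements and an integer `k ≥ m`, there is a real polynomial
`p` with `deg p ≤ k`, `p(0) = 1` and `p(μ) = 0` for all `μ ∈ σ₀`, such that
`|p(λ)| ≤ 2 (∏_{μ ∈ σ₀} |1 - λ/μ|) ((√(b/a) - 1)/(√(b/a) + 1))^{k-m}`
for every `λ ∈ [a, b]`. -/
theorem chebyshev_bound_with_roots (a b : ℝ) (ha : 0 < a) (hab : a ≤ b)
    (σ₀ : Finset ℝ) (hσ₀ : (σ₀ : Set ℝ) ⊆ Set.Ioi 0) (m : ℕ) (hm : σ₀.card = m)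
    (k : ℕ) (hk : m ≤ k) :
    ∃ p : Polynomial ℝ, p.natDegree ≤ k ∧ p.eval 0 = 1 ∧
      (∀ μ ∈ σ₀, p.eval μ = 0) ∧
      ∀ lam ∈ Set.Icc a b,
        |p.eval lam| ≤ 2 * (∏ μ ∈ σ₀, |1 - lam / μ|) *
          ((Real.sqrt (b / a) - 1) / (Real.sqrt (b / a) + 1)) ^ (k - m) := by
  set n := k - m with hn
  set q : Polynomial ℝ := ∏ μ ∈ σ₀, (1 - Polynomial.C μ⁻¹ * Polynomial.X) with hq
  have hqdeg : q.natDegree ≤ m := by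
    refine le_trans (Polynomial.natDegree_prod_le _ _) ?_
    rw [← hm]
    calc ∑ μ ∈ σ₀, (1 - Polynomial.C μ⁻¹ * Polynomial.X).natDegree
        ≤ ∑ _μ ∈ σ₀, 1 := by
          refine Finset.sum_le_sum fun μ _ => ?_
          compute_degree
      _ = σ₀.card := by simp
  have hq0 : q.eval 0 = 1 := by simp [hq, Polynomial.eval_prod]
  have hqμ : ∀ μ ∈ σ₀, q.eval μ = 0 := by
    intro μ hμ
    rw [hq, Polynomial.eval_prod]
    refine Finset.prod_eq_zero hμ ?_
    have : μ ≠ 0 := ne_of_gt (hσ₀ hμ)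
    simp [inv_mul_cancel₀ this]
  have hqeval : ∀ lam : ℝ, q.eval lam = ∏ μ ∈ σ₀, (1 - lam / μ) := by
    intro lam
    rw [hq, Polynomial.eval_prod]
    refine Finset.prod_congr rfl fun μ _ => ?_
    simp only [Polynomial.eval_sub, Polynomial.eval_one, Polynomial.eval_mul,
      Polynomial.eval_C, Polynomial.eval_X]
    rw [div_eq_mul_inv, mul_comm]
  have hqabs : ∀ lam : ℝ, |q.eval lam| = ∏ μ ∈ σ₀, |1 - lam / μ| := by
    intro lam; rw [hqeval, Finset.abs_prod]
  have hPnn : ∀ lam : ℝ, 0 ≤ ∏ μ ∈ σ₀, |1 - lam / μ| :=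
    fun lam => Finset.prod_nonneg fun μ _ => abs_nonneg _
  rcases eq_or_lt_of_le hab with heq | hlt
  · -- a = b case
    have hs : Real.sqrt (b / a) = 1 := by
      rw [← heq, div_self ha.ne', Real.sqrt_one]
    refine ⟨q * (1 - Polynomial.C a⁻¹ * Polynomial.X) ^ n, ?_, ?_, ?_, ?_⟩
    · refine le_trans Polynomial.natDegree_mul_le ?_
      have h1 : ((1 - Polynomial.C a⁻¹ * Polynomial.X : ℝ[X]) ^ n).natDegree ≤ n := by
        refine le_trans (Polynomial.natDegree_pow_le) ?_
        have h2 : (1 - Polynomial.C a⁻¹ * Polynomial.X : ℝ[X]).natDegree ≤ 1 := by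
          compute_degree
        calc n * (1 - Polynomial.C a⁻¹ * Polynomial.X : ℝ[X]).natDegree ≤ n * 1 :=
            Nat.mul_le_mul_left n h2
          _ = n := mul_one n
      omega
    · simp [hq0]
    · intro μ hμ; simp [hqμ μ hμ]
    · intro lam hlam
      have hlam' : lam = a := le_antisymm (heq ▸ hlam.2) hlam.1
      subst hlam'
      rw [hs]
      have hz : ((1:ℝ) - 1) / (1 + 1) = 0 := by norm_num
      rw [hz]
      simp only [Polynomial.eval_mul, Polynomial.eval_pow, Polynomial.eval_sub,
        Polynomial.eval_one, Polynomial.eval_C, Polynomial.eval_X]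
      rw [inv_mul_cancel₀ ha.ne']
      rw [abs_mul, hqabs]
      rw [show ((1:ℝ) - 1) = 0 by norm_num, abs_pow, abs_zero]
      have h3 : (0:ℝ) ≤ 0 ^ n := pow_nonneg le_rfl n
      nlinarith [mul_nonneg (hPnn lam) h3]
  · -- a < b case
    have hb : 0 < b := ha.trans hlt
    have hba : 0 < b - a := sub_pos.2 hlt
    set s := Real.sqrt (b / a) with hsdef
    set u := Real.sqrt a with hu
    set v := Real.sqrt b with hv
    have hu0 : 0 < u := Real.sqrt_pos.2 ha
    have hv0 : 0 < v := Real.sqrt_pos.2 hb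
    have huv : u < v := Real.sqrt_lt_sqrt ha.le hlt
    have hu2 : u ^ 2 = a := Real.sq_sqrt ha.le
    have hv2 : v ^ 2 = b := Real.sq_sqrt hb.le
    have hvu : (0:ℝ) < v - u := sub_pos.2 huv
    have hvu2 : (0:ℝ) < v ^ 2 - u ^ 2 := by nlinarith
    have hs_eq : s = v / u := by
      rw [hsdef, Real.sqrt_div hb.le, ← hu, ← hv]
    have hs1 : 1 < s := by
      rw [hs_eq, lt_div_iff₀ hu0, one_mul]; exact huv
    set x₀ := (b + a) / (b - a) with hx₀def
    have hx₀ : 1 < x₀ := (one_lt_div hba).2 (by linarith)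
    set D := Real.sqrt (x₀ ^ 2 - 1) with hDdef
    have hD2 : D ^ 2 = x₀ ^ 2 - 1 := Real.sq_sqrt (by nlinarith)
    have hDval : D = 2 * u * v / (b - a) := by
      have h1 : (2 * u * v / (b - a)) ^ 2 = x₀ ^ 2 - 1 := by
        rw [hx₀def, ← hu2, ← hv2]
        field_simp
        ring
      calc D = Real.sqrt ((2 * u * v / (b - a)) ^ 2) := by rw [h1]
        _ = 2 * u * v / (b - a) := Real.sqrt_sq (by positivity)
    set y := x₀ + D with hydef
    have hyval : y = (v + u) / (v - u) := by
      rw [hydef, hDval, hx₀def, ← hu2, ← hv2, ← add_div,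
        div_eq_div_iff (ne_of_gt hvu2) (ne_of_gt hvu)]
      ring
    have hy1 : 1 < y := by
      rw [hyval, lt_div_iff₀ hvu, one_mul]; linarith
    set ρ := (s - 1) / (s + 1) with hρdef
    have hρpos : 0 < ρ := div_pos (by linarith) (by linarith)
    have hρval : ρ = (v - u) / (v + u) := by
      rw [hρdef, hs_eq, div_eq_div_iff (by positivity) (by positivity)]
      field_simp
      try ring
    have hρy : ρ * y = 1 := by
      rw [hρval, hyval, div_mul_div_comm, mul_comm (v - u) (v + u)]
      exact div_self (by positivity)
    set t := Real.log y with htdef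
    have ht : Real.exp t = y := Real.exp_log (by linarith)
    have hinv : y * (x₀ - D) = 1 := by
      rw [hydef]; linear_combination -hD2
    have hexp_neg : Real.exp (-t) = x₀ - D := by
      rw [Real.exp_neg, ht]
      exact (eq_inv_of_mul_eq_one_right hinv).symm
    have hcosh : Real.cosh t = x₀ := by
      rw [Real.cosh_eq, ht, hexp_neg]; ring
    have hT : (Polynomial.Chebyshev.T ℝ (n : ℤ)).eval x₀ = Real.cosh (n * t) := by
      have h0 := T_cosh t (n : ℤ)
      rw [hcosh] at h0
      rw [h0]; norm_cast
    have hTpos : 0 < (Polynomial.Chebyshev.T ℝ (n : ℤ)).eval x₀ := by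
      rw [hT]; exact Real.cosh_pos _
    have hTge : y ^ n / 2 ≤ (Polynomial.Chebyshev.T ℝ (n : ℤ)).eval x₀ := by
      rw [hT, Real.cosh_eq]
      have h1 : Real.exp ((n : ℝ) * t) = y ^ n := by rw [Real.exp_nat_mul, ht]
      have h2 := Real.exp_pos (-((n : ℝ) * t))
      rw [h1]
      linarith
    have hρn : 0 < ρ ^ n := pow_pos hρpos n
    have hTinv : ((Polynomial.Chebyshev.T ℝ (n : ℤ)).eval x₀)⁻¹ ≤ 2 * ρ ^ n := by
      have hyρ : ρ ^ n * y ^ n = 1 := by rw [← mul_pow, hρy, one_pow]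
      rw [← one_div, div_le_iff₀ hTpos]
      nlinarith [mul_le_mul_of_nonneg_left hTge hρn.le]
    refine ⟨q * Polynomial.C ((Polynomial.Chebyshev.T ℝ (n : ℤ)).eval x₀)⁻¹ *
      (Polynomial.Chebyshev.T ℝ (n : ℤ)).comp
        (Polynomial.C x₀ - Polynomial.C (2 / (b - a)) * Polynomial.X), ?_, ?_, ?_, ?_⟩
    · refine le_trans Polynomial.natDegree_mul_le ?_
      have h1 : (q * Polynomial.C ((Polynomial.Chebyshev.T ℝ (n : ℤ)).eval x₀)⁻¹).natDegree ≤ m :=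
        le_trans Polynomial.natDegree_mul_le (by simpa using hqdeg)
      have h2 : ((Polynomial.Chebyshev.T ℝ (n : ℤ)).comp
          (Polynomial.C x₀ - Polynomial.C (2 / (b - a)) * Polynomial.X)).natDegree ≤ n := by
        refine le_trans Polynomial.natDegree_comp_le ?_
        have h3 : (Polynomial.C x₀ - Polynomial.C (2 / (b - a)) * Polynomial.X : ℝ[X]).natDegree ≤ 1 := by
          compute_degree
        calc (Polynomial.Chebyshev.T ℝ (n : ℤ)).natDegree *
              (Polynomial.C x₀ - Polynomial.C (2 / (b - a)) * Polynomial.X : ℝ[X]).natDegree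
            ≤ n * 1 := Nat.mul_le_mul (natDegree_T_le n) h3
          _ = n := mul_one n
      omega
    · simp only [Polynomial.eval_mul, Polynomial.eval_C, Polynomial.eval_comp,
        Polynomial.eval_sub, Polynomial.eval_X, hq0]
      rw [mul_zero, sub_zero, one_mul, inv_mul_cancel₀ hTpos.ne']
    · intro μ hμ
      simp [hqμ μ hμ]
    · intro lam hlam
      obtain ⟨hla, hlb⟩ := hlam
      have hcval : x₀ - 2 / (b - a) * lam = (b + a - 2 * lam) / (b - a) := by
        rw [hx₀def]; field_simp; try ring
      have hc1 : x₀ - 2 / (b - a) * lam ≤ 1 := by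
        rw [hcval, div_le_one hba]; linarith
      have hc2 : -1 ≤ x₀ - 2 / (b - a) * lam := by
        rw [hcval, le_div_iff₀ hba]; linarith
      have habs : |(Polynomial.Chebyshev.T ℝ (n : ℤ)).eval (x₀ - 2 / (b - a) * lam)| ≤ 1 :=
        abs_T_le hc2 hc1 _
      have heval : |(q * Polynomial.C ((Polynomial.Chebyshev.T ℝ (n : ℤ)).eval x₀)⁻¹ *
          (Polynomial.Chebyshev.T ℝ (n : ℤ)).comp
            (Polynomial.C x₀ - Polynomial.C (2 / (b - a)) * Polynomial.X)).eval lam|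
          = (∏ μ ∈ σ₀, |1 - lam / μ|) *
            (((Polynomial.Chebyshev.T ℝ (n : ℤ)).eval x₀)⁻¹ *
              |(Polynomial.Chebyshev.T ℝ (n : ℤ)).eval (x₀ - 2 / (b - a) * lam)|) := by
        simp only [Polynomial.eval_mul, Polynomial.eval_C, Polynomial.eval_comp,
          Polynomial.eval_sub, Polynomial.eval_X]
        rw [abs_mul, abs_mul, hqabs, abs_of_pos (inv_pos.2 hTpos), mul_assoc]
      rw [heval]
      have hP := hPnn lam
      have h1 : ((Polynomial.Chebyshev.T ℝ (n : ℤ)).eval x₀)⁻¹ *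
          |(Polynomial.Chebyshev.T ℝ (n : ℤ)).eval (x₀ - 2 / (b - a) * lam)| ≤ 2 * ρ ^ n := by
        calc ((Polynomial.Chebyshev.T ℝ (n : ℤ)).eval x₀)⁻¹ *
              |(Polynomial.Chebyshev.T ℝ (n : ℤ)).eval (x₀ - 2 / (b - a) * lam)|
            ≤ ((Polynomial.Chebyshev.T ℝ (n : ℤ)).eval x₀)⁻¹ * 1 :=
              mul_le_mul_of_nonneg_left habs (inv_pos.2 hTpos).le
          _ = ((Polynomial.Chebyshev.T ℝ (n : ℤ)).eval x₀)⁻¹ := mul_one _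
          _ ≤ 2 * ρ ^ n := hTinv
      calc (∏ μ ∈ σ₀, |1 - lam / μ|) *
            (((Polynomial.Chebyshev.T ℝ (n : ℤ)).eval x₀)⁻¹ *
              |(Polynomial.Chebyshev.T ℝ (n : ℤ)).eval (x₀ - 2 / (b - a) * lam)|)
          ≤ (∏ μ ∈ σ₀, |1 - lam / μ|) * (2 * ρ ^ n) := mul_le_mul_of_nonneg_left h1 hP
        _ = 2 * (∏ μ ∈ σ₀, |1 - lam / μ|) * ρ ^ n := by ring
end
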